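/- A hidden path exists with respect to ⟨i,m⟩ (i.e., for every k = 0,...,m there is a node ⟨j_k,k⟩ not revealed to ⟨i,m⟩) if and only if there exists a run r' of the full-information protocol with r'_i(m) = r_i(m) in which some process active at time m knows ∃0, provided K_i∃0 does not hold at (r,m). Moreover, in such a witnessing run r', the adversary can be chosen so that j_0 has initial value 0, each ⟨j_k,k⟩ for k < m crashes sending a message solely to ⟨j_{k+1},k+1⟩, and j_m is nonfaulty. -/
import Mathlib


attribute [local instance] Classical.propDecidable

/-- An adversary in the synchronous crash-failure model: an input vector of binary
initial values, a failure pattern given by the delivery relation `F` (`F m j i` means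
the message sent by `j` at time `m` is delivered to `i` at time `m+1`, i.e. in round `m+1`),
and a crash round for each process (`⊤` meaning the process never crashes).
A process behaves correctly before its crashing round and sends nothing afterwards;
during its crashing round it may send to an arbitrary subset. -/
structure Adversary (n : ℕ) where
  init : Fin n → Bool
  F : ℕ → Fin n → Fin n → Prop
  crash : Fin n → ℕ∞
  crash_pos : ∀ j, 1 ≤ crash j
  before_crash : ∀ (m : ℕ) (j i : Fin n), ((m + 1 : ℕ) : ℕ∞) < crash j → F m j i
  after_crash : ∀ (m : ℕ) (j i : Fin n), crash j < ((m + 1 : ℕ) : ℕ∞) → ¬ F m j i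

namespace Adversary

variable {n : ℕ}

/-- A process is faulty if it crashes at some point. -/
def Faulty (A : Adversary n) (j : Fin n) : Prop := A.crash j ≠ ⊤

/-- The number `f` of actual failures in the run determined by the adversary. -/
noncomputable def numFaults (A : Adversary n) : ℕ := {j | A.Faulty j}.ncard

/-- A process is active at time `m` if it has not crashed before time `m`. -/
def Active (A : Adversary n) (j : Fin n) (m : ℕ) : Prop := ((m : ℕ) : ℕ∞) < A.crash j

end Adversary

/-- `Seen A ⟨j,ℓ⟩ ⟨i,m⟩`: node `⟨j,ℓ⟩` is in the view (communication graph) of node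
`⟨i,m⟩`, i.e. there is a message chain from `⟨j,ℓ⟩` to `⟨i,m⟩`. -/
inductive Seen {n : ℕ} (A : Adversary n) : Fin n × ℕ → Fin n × ℕ → Prop
  | refl (p : Fin n × ℕ) : Seen A p p
  | self {p : Fin n × ℕ} {i : Fin n} {m : ℕ} : Seen A p (i, m) → Seen A p (i, m + 1)
  | step {p : Fin n × ℕ} {j i : Fin n} {m : ℕ} : Seen A p (j, m) → A.F m j i →
      Seen A p (i, m + 1)

open Adversary

/-- Two adversaries give process `i` the same view at time `m` in a full-information
protocol: the same nodes are seen, with the same initial values at seen time-0 nodes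
and the same incoming edges at seen later nodes. -/
def sameView {n : ℕ} (A B : Adversary n) (i : Fin n) (m : ℕ) : Prop :=
  (∀ p, Seen A p (i, m) ↔ Seen B p (i, m)) ∧
  (∀ j, Seen A (j, 0) (i, m) → A.init j = B.init j) ∧
  (∀ (k : ℕ) (j j' : Fin n), Seen A (j', k + 1) (i, m) → (A.F k j j' ↔ B.F k j j'))

/-- The local state of (active) process `i` at time `m` is the same under both
adversaries: `i` is active in both and has the same full-information view. -/
def sameLocal {n : ℕ} (A B : Adversary n) (i : Fin n) (m : ℕ) : Prop :=
  A.Active i m ∧ B.Active i m ∧ sameView A B i m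

/-- The runs of the system are those generated by adversaries with at most `t` crashes. -/
def Valid {n : ℕ} (t : ℕ) (A : Adversary n) : Prop := A.numFaults ≤ t

/-- Knowledge in the full-information protocol: `i` knows the fact `φ` at time `m`
iff `φ` holds at time `m` in every run (with at most `t` failures) in which `i` has
the same local state. -/
def Knows {n : ℕ} (t : ℕ) (φ : Adversary n → ℕ → Prop) (A : Adversary n) (i : Fin n)
    (m : ℕ) : Prop :=
  ∀ B : Adversary n, Valid t B → sameLocal A B i m → φ B m

/-- The fact `∃v`: some process has initial value `v`. -/
def existsVal {n : ℕ} (v : Bool) : Adversary n → ℕ → Prop := fun A _ => ∃ j, A.init j = v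

/-- Node `⟨j',m'⟩` is revealed to `⟨i,m⟩`: either it is seen by `⟨i,m⟩`, or for some
seen node `⟨i',m'⟩` the edge `(⟨j',m'-1⟩,⟨i',m'⟩)` is absent from `i`'s view
(proving that `j'` crashed before time `m'`). -/
def RevealedNode {n : ℕ} (A : Adversary n) (j' : Fin n) (m' : ℕ) (i : Fin n) (m : ℕ) :
    Prop :=
  Seen A (j', m') (i, m) ∨
  ∃ (i' : Fin n) (k : ℕ), m' = k + 1 ∧ Seen A (i', k + 1) (i, m) ∧ ¬ A.F k j' i'

/-- Time `k` is revealed to `⟨i,m⟩` if every node `⟨j',k⟩` is revealed to `⟨i,m⟩`. -/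
def RevealedTime {n : ℕ} (A : Adversary n) (k : ℕ) (i : Fin n) (m : ℕ) : Prop :=
  ∀ j', RevealedNode A j' k i m

/-- A hidden path w.r.t. `⟨i,m⟩`: for each `k ≤ m` a node `⟨j_k,k⟩` not revealed to `⟨i,m⟩`. -/
def HiddenPath {n : ℕ} (A : Adversary n) (i : Fin n) (m : ℕ) : Prop :=
  ∃ js : ℕ → Fin n, ∀ k ≤ m, ¬ RevealedNode A (js k) k i m

/-- `not-known(∃0)`: no process active at time `m` knows `∃0`. -/
def notKnown0 {n : ℕ} (t : ℕ) : Adversary n → ℕ → Prop :=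
  fun A m => ∀ j, A.Active j m → ¬ Knows t (existsVal false) A j m

/-- A (full-information, deterministic) decision protocol, described by the decision
status function: `P A i m = some v` iff by time `m` process `i` has decided `v`
in the run determined by adversary `A`. -/
abbrev ProtoDec (n : ℕ) : Type := Adversary n → Fin n → ℕ → Option Bool

/-- Sanity conditions making a decision-status function a protocol: decisions are
irrevocable, and (for active processes) depend only on the local state. -/
def IsProtocol {n : ℕ} (t : ℕ) (P : ProtoDec n) : Prop :=
  (∀ A i m v, P A i m = some v → P A i (m + 1) = some v) ∧
  (∀ A B i m, Valid t A → Valid t B → sameLocal A B i m → P A i m = P B i m)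

/-- Process `i` performs the action `decide(v)` at time `m`: it is decided on `v`
at `m` and was undecided before. -/
def DecidesAt {n : ℕ} (P : ProtoDec n) (A : Adversary n) (i : Fin n) (m : ℕ) (v : Bool) :
    Prop :=
  P A i m = some v ∧ ∀ k < m, P A i k = none

/-- Decision: every correct process eventually decides. -/
def Decision {n : ℕ} (t : ℕ) (P : ProtoDec n) : Prop :=
  ∀ A : Adversary n, Valid t A → ∀ i, ¬ A.Faulty i → ∃ m, P A i m ≠ none

/-- Validity: if all initial values are `v` then correct processes decide `v`. -/
def Validity {n : ℕ} (t : ℕ) (P : ProtoDec n) : Prop :=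
  ∀ A : Adversary n, Valid t A → ∀ v : Bool, (∀ j, A.init j = v) →
    ∀ i m w, ¬ A.Faulty i → P A i m = some w → w = v

/-- Agreement: all correct processes decide on the same value. -/
def Agreement {n : ℕ} (t : ℕ) (P : ProtoDec n) : Prop :=
  ∀ A : Adversary n, Valid t A → ∀ i j m m' v w, ¬ A.Faulty i → ¬ A.Faulty j →
    P A i m = some v → P A j m' = some w → v = w

def ConsensusSolves {n : ℕ} (t : ℕ) (P : ProtoDec n) : Prop :=
  Decision t P ∧ Validity t P ∧ Agreement t P

/-- Uniform Agreement: all processes that decide (faulty or not) decide the same value. -/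
def UniformAgreement {n : ℕ} (t : ℕ) (P : ProtoDec n) : Prop :=
  ∀ A : Adversary n, Valid t A → ∀ i j m m' v w,
    P A i m = some v → P A j m' = some w → v = w

def UniformConsensusSolves {n : ℕ} (t : ℕ) (P : ProtoDec n) : Prop :=
  Decision t P ∧ Validity t P ∧ UniformAgreement t P

/-- `Q` dominates `P`: for every adversary and process, if `i` has decided by time `m`
in `P` then `i` has decided by time `m` in `Q`. -/
def Dominates {n : ℕ} (t : ℕ) (Q P : ProtoDec n) : Prop :=
  ∀ A : Adversary n, Valid t A → ∀ i m, P A i m ≠ none → Q A i m ≠ none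

def StrictlyDominates {n : ℕ} (t : ℕ) (Q P : ProtoDec n) : Prop :=
  Dominates t Q P ∧ ¬ Dominates t P Q

/-- Turn a per-time decision rule into a decision-status function (the first decision
taken is kept forever). -/
def runDec (step : ℕ → Option Bool) : ℕ → Option Bool
  | 0 => step 0
  | m + 1 => (runDec step m).elim (step (m + 1)) some

/-- The protocol `P₀`: decide 0 as soon as `K_i ∃0` holds, otherwise decide 1 at time `t+1`. -/
noncomputable def P0 (n t : ℕ) : ProtoDec n := fun A i =>
  runDec fun m =>
    if Knows t (existsVal false) A i m then some false
    else if m = t + 1 then some true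
    else none

/-- The unbeatable protocol `Opt₀`: decide 0 as soon as `K_i ∃0` holds, and decide 1
as soon as `K_i not-known(∃0)` holds. -/
noncomputable def Opt0 (n t : ℕ) : ProtoDec n := fun A i =>
  runDec fun m =>
    if Knows t (existsVal false) A i m then some false
    else if Knows t (notKnown0 t) A i m then some true
    else none

/-- The number of processes with initial value `false` (0). -/
noncomputable def zeros {n : ℕ} (A : Adversary n) : ℕ :=
  (Finset.univ.filter fun j => A.init j = false).card

/-- The number of processes with initial value `true` (1). -/
noncomputable def ones {n : ℕ} (A : Adversary n) : ℕ :=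
  (Finset.univ.filter fun j => A.init j = true).card

/-- The fact `Maj = 0`: at least `n/2` initial values are 0. -/
def Maj0 (n : ℕ) : Adversary n → ℕ → Prop := fun A _ => n ≤ 2 * zeros A

/-- The fact `Maj = 1`: strictly more than `n/2` initial values are 1. -/
def Maj1 (n : ℕ) : Adversary n → ℕ → Prop := fun A _ => n < 2 * ones A

noncomputable def seenZeros {n : ℕ} (A : Adversary n) (i : Fin n) (m : ℕ) : ℕ :=
  (Finset.univ.filter fun j => Seen A (j, 0) (i, m) ∧ A.init j = false).card

noncomputable def seenOnes {n : ℕ} (A : Adversary n) (i : Fin n) (m : ℕ) : ℕ :=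
  (Finset.univ.filter fun j => Seen A (j, 0) (i, m) ∧ A.init j = true).card

/-- `Maj(vals(i,m))`: 0 if at least half of the initial values known to `i` at `m`
are 0, and 1 otherwise. -/
noncomputable def MajSeen {n : ℕ} (A : Adversary n) (i : Fin n) (m : ℕ) : Bool :=
  if seenOnes A i m ≤ seenZeros A i m then false else true

/-- The unbeatable majority consensus protocol `Opt_Maj`. -/
noncomputable def OptMaj (n t : ℕ) : ProtoDec n := fun A i =>
  runDec fun m =>
    if Knows t (Maj0 n) A i m then some false
    else if Knows t (Maj1 n) A i m then some true
    else if ∃ k ≤ m, RevealedTime A k i m then some (MajSeen A i m)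
    else none

/-- The fact `∀1`: all initial values are 1. -/
def all1 (n : ℕ) : Adversary n → ℕ → Prop := fun A _ => ∀ j, A.init j = true

/-- The sender set of `i` repeats at `⟨i,m⟩`: `i` hears from the same set of processes
in rounds `m-1` and `m` (only meaningful for `m ≥ 2`). -/
def senderSetRepeats {n : ℕ} (A : Adversary n) (i : Fin n) (m : ℕ) : Prop :=
  ∀ j, (A.F (m - 2) j i ↔ A.F (m - 1) j i)

/-- The protocol `P0_opt` of Halpern, Moses and Waarts. -/
noncomputable def P0opt (n t : ℕ) : ProtoDec n := fun A i =>
  runDec fun m =>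
    if Knows t (existsVal false) A i m then some false
    else if Knows t (all1 n) A i m ∨ (2 ≤ m ∧ senderSetRepeats A i m) then some true
    else none

/-- The fact `∃correct(v)`: some correct (never-failing) process knows `∃v`. -/
def ExistsCorrectKnows {n : ℕ} (t : ℕ) (v : Bool) : Adversary n → ℕ → Prop :=
  fun A m => ∃ j, ¬ A.Faulty j ∧ Knows t (existsVal v) A j m

/-- The number `d` of failures process `i` knows of at time `m`: the number of
processes `j ≠ i` from which `i` receives no message in round `m`. -/
noncomputable def knownFaults {n : ℕ} (A : Adversary n) (i : Fin n) : ℕ → ℕ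
  | 0 => 0
  | m + 1 => (Finset.univ.filter fun j => j ≠ i ∧ ¬ A.F m j i).card

/-- The protocol `u-P₀` for uniform consensus: decide 0 as soon as
`K_i ∃correct(0)` holds, otherwise decide 1 at time `t+1`. -/
noncomputable def uP0 (n t : ℕ) : ProtoDec n := fun A i =>
  runDec fun m =>
    if Knows t (ExistsCorrectKnows t false) A i m then some false
    else if m = t + 1 then some true
    else none

/-- The unbeatable uniform consensus protocol `u-Opt₀`. -/
noncomputable def uOpt0 (n t : ℕ) : ProtoDec n := fun A i =>
  runDec fun m =>
    if Knows t (ExistsCorrectKnows t false) A i m then some false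
    else if ¬ Knows t (existsVal false) A i m ∧ ∃ k ≤ m, RevealedTime A k i m then
      some true
    else none

/-- All decisions in the run `P[A]` are taken at or before time `m`. -/
def AllDecidedBy {n : ℕ} (P : ProtoDec n) (A : Adversary n) (m : ℕ) : Prop :=
  ∀ i k, P A i k ≠ none → P A i m ≠ none

/-- `Q` last-decider dominates `P`. -/
def LDDominates {n : ℕ} (t : ℕ) (Q P : ProtoDec n) : Prop :=
  ∀ A : Adversary n, Valid t A → ∀ m, AllDecidedBy P A m → AllDecidedBy Q A m

/-- A 0-chain for `⟨i,m⟩`: distinct processes `j₀,…,j_d = i` with `d ≤ m`, `j₀` having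
initial value 0, and `j_k` receiving a message from `j_{k-1}` at time `k` (round `k`). -/
def ZeroChain {n : ℕ} (A : Adversary n) (i : Fin n) (m : ℕ) : Prop :=
  ∃ d ≤ m, ∃ js : ℕ → Fin n, js d = i ∧
    (∀ k ≤ d, ∀ l ≤ d, js k = js l → k = l) ∧
    A.init (js 0) = false ∧
    ∀ k, 1 ≤ k → k ≤ d → A.F (k - 1) (js (k - 1)) (js k)

/-! ### Auxiliary lemmas for the hidden path theorem -/

section HiddenPathAux

variable {n : ℕ}

lemma seen_snd_le {A : Adversary n} {p q : Fin n × ℕ} (h : Seen A p q) : p.2 ≤ q.2 := by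
  induction h with
  | refl => exact le_refl _
  | self _ ih => exact Nat.le_succ_of_le ih
  | step _ _ ih => exact Nat.le_succ_of_le ih

lemma seen_trans {A : Adversary n} {p q r : Fin n × ℕ} (h1 : Seen A p q) (h2 : Seen A q r) :
    Seen A p r := by
  induction h2 with
  | refl => exact h1
  | self _ ih => exact Seen.self ih
  | step _ hf ih => exact Seen.step ih hf

lemma seen_self_mono {A : Adversary n} {j : Fin n} {k l : ℕ} (h : k ≤ l) :
    Seen A (j, k) (j, l) := by
  induction l with
  | zero =>
    obtain rfl : k = 0 := Nat.le_zero.mp h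
    exact Seen.refl _
  | succ l ih =>
    rcases Nat.lt_or_ge k (l + 1) with h' | h'
    · exact Seen.self (ih (Nat.lt_succ_iff.mp h'))
    · obtain rfl : k = l + 1 := le_antisymm h h'
      exact Seen.refl _

/-- If two adversaries agree on initial values at time-0 nodes seen (in `A`) by `⟨i,m⟩`
and on edges whose target is seen (in `A`) by `⟨i,m⟩`, then `i` has the same view. -/
lemma sameView_of_agree {A B : Adversary n} {i : Fin n} {m : ℕ}
    (hF : ∀ (l : ℕ) (j i' : Fin n), Seen A (i', l + 1) (i, m) → (A.F l j i' ↔ B.F l j i'))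
    (hinit : ∀ j, Seen A (j, 0) (i, m) → A.init j = B.init j) :
    sameView A B i m := by
  have key1 : ∀ p q, Seen B p q → Seen A q (i, m) → Seen A p (i, m) := by
    intro p q h
    induction h with
    | refl => exact id
    | self _ ih =>
      intro hq
      exact ih (seen_trans (Seen.self (Seen.refl _)) hq)
    | step h hf ih =>
      intro hq
      have hA : A.F _ _ _ := (hF _ _ _ hq).mpr hf
      exact ih (seen_trans (Seen.step (Seen.refl _) hA) hq)
  have key2 : ∀ p q, Seen A p q → Seen A q (i, m) → Seen B p q := by
    intro p q h
    induction h with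
    | refl => intro _; exact Seen.refl _
    | self hp ih =>
      intro hq
      exact Seen.self (ih (seen_trans (Seen.self (Seen.refl _)) hq))
    | step hp hf ih =>
      intro hq
      have h1 : Seen A _ (i, m) := seen_trans (Seen.step (Seen.refl _) hf) hq
      exact Seen.step (ih h1) ((hF _ _ _ hq).mp hf)
  exact ⟨fun p => ⟨fun h => key2 p (i, m) h (Seen.refl _), fun h => key1 p (i, m) h (Seen.refl _)⟩,
    hinit, fun k j j' h => hF k j j' h⟩

lemma seen_stuck {B : Adversary n} {jk : Fin n} {k : ℕ}
    (h : ∀ l, k ≤ l → ∀ q, ¬ B.F l jk q) {q : Fin n × ℕ}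
    (hs : Seen B (jk, k) q) : q.1 = jk := by
  have key : q.1 = jk ∧ k ≤ q.2 := by
    induction hs with
    | refl => exact ⟨rfl, le_rfl⟩
    | self _ ih => exact ⟨ih.1, Nat.le_succ_of_le ih.2⟩
    | @step j2 i2 l hp hf ih =>
      have e : j2 = jk := ih.1
      subst e
      exact absurd hf (h l ih.2 i2)
  exact key.1

lemma seen_decompose {B : Adversary n} {p q : Fin n × ℕ} (h : Seen B p q) :
    ∀ k, p.2 ≤ k → k ≤ q.2 → ∃ r : Fin n, Seen B p (r, k) ∧ Seen B (r, k) q := by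
  obtain ⟨a, b⟩ := p
  induction h with
  | refl =>
    intro k h1 h2
    have h1' : b ≤ k := h1
    have h2' : k ≤ b := h2
    obtain rfl : k = b := le_antisymm h2' h1'
    exact ⟨a, Seen.refl _, Seen.refl _⟩
  | @self i' l hp ih =>
    intro k h1 h2
    rcases Nat.lt_or_ge k (l + 1) with h' | h'
    · obtain ⟨r, hr1, hr2⟩ := ih k h1 (Nat.lt_succ_iff.mp h')
      exact ⟨r, hr1, Seen.self hr2⟩
    · obtain rfl : k = l + 1 := le_antisymm h2 h'
      exact ⟨i', Seen.self hp, Seen.refl _⟩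
  | @step j i' l hp hf ih =>
    intro k h1 h2
    rcases Nat.lt_or_ge k (l + 1) with h' | h'
    · obtain ⟨r, hr1, hr2⟩ := ih k h1 (Nat.lt_succ_iff.mp h')
      exact ⟨r, hr1, Seen.step hr2 hf⟩
    · obtain rfl : k = l + 1 := le_antisymm h2 h'
      exact ⟨i', Seen.step hp hf, Seen.refl _⟩

lemma chain_seen (D : Adversary n) (js : ℕ → Fin n) (m : ℕ)
    (h : ∀ k < m, D.F k (js k) (js (k + 1))) : ∀ k ≤ m, Seen D (js 0, 0) (js k, k) := by
  intro k hk
  induction k with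
  | zero => exact Seen.refl _
  | succ k ih => exact Seen.step (ih (by omega)) (h k hk)

lemma not_hidden_revealed {A : Adversary n} {i : Fin n} {m : ℕ}
    (h : ¬ HiddenPath A i m) : ∃ k ≤ m, RevealedTime A k i m := by
  by_contra h2
  push_neg at h2
  apply h
  have h3 : ∀ k, ∃ j', k ≤ m → ¬ RevealedNode A j' k i m := by
    intro k
    by_cases hk : k ≤ m
    · have hnt := h2 k hk
      simp only [RevealedTime, not_forall] at hnt
      obtain ⟨j', hj'⟩ := hnt
      exact ⟨j', fun _ => hj'⟩
    · exact ⟨i, fun hkm => absurd hkm hk⟩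
  choose js hjs using h3
  exact ⟨js, fun k hk => hjs k hk⟩

/-- The construction of the witnessing adversary from a hidden path. -/
lemma hidden_construct (t : ℕ) (A : Adversary n) (hA : Valid t A) (i : Fin n) (m : ℕ)
    (hact : A.Active i m) (js : ℕ → Fin n)
    (hhid : ∀ k ≤ m, ¬ RevealedNode A (js k) k i m) :
    ∃ B : Adversary n, Valid t B ∧ sameLocal A B i m ∧
      B.Active (js m) m ∧ Knows t (existsVal false) B (js m) m ∧
      B.init (js 0) = false ∧
      (∀ k < m, B.crash (js k) = ((k + 1 : ℕ) : ℕ∞)) ∧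
      (∀ k < m, ∀ i' : Fin n, B.F k (js k) i' → i' = js (k + 1)) ∧
      ¬ B.Faulty (js m) := by
  classical
  -- basic consequences of hiddenness
  have hseeni : ∀ k ≤ m, Seen A (i, k) (i, m) := fun k hk => seen_self_mono hk
  have hns : ∀ k ≤ m, ¬ Seen A (js k, k) (i, m) := fun k hk h => hhid k hk (Or.inl h)
  have hF2 : ∀ k', k' + 1 ≤ m → ∀ i', Seen A (i', k' + 1) (i, m) → A.F k' (js (k' + 1)) i' := by
    intro k' hk i' hs
    by_contra hf
    exact hhid (k' + 1) hk (Or.inr ⟨i', k', rfl, hs, hf⟩)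
  have hseen_lt : ∀ l ≤ m, ∀ k < l, Seen A (js l, k) (i, m) := by
    intro l hl k hk
    obtain ⟨l', rfl⟩ : ∃ l', l = l' + 1 := ⟨l - 1, by omega⟩
    have h1 : Seen A (js (l' + 1), k) (js (l' + 1), l') := seen_self_mono (by omega)
    have h2 : A.F l' (js (l' + 1)) i := hF2 l' hl i (hseeni _ hl)
    exact seen_trans (Seen.step h1 h2) (hseeni _ hl)
  have hinj : ∀ k ≤ m, ∀ l ≤ m, js k = js l → k = l := by
    intro k hk l hl he
    by_contra hne
    rcases Nat.lt_or_ge k l with h | h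
    · exact hns k hk (by rw [he]; exact hseen_lt l hl k h)
    · exact hns l hl (by rw [← he]; exact hseen_lt k hk l (by omega))
  have hji : ∀ k ≤ m, js k ≠ i := fun k hk he => hns k hk (by rw [he]; exact hseeni k hk)
  have hnoLater : ∀ k ≤ m, ∀ l, k ≤ l → ∀ i', Seen A (i', l + 1) (i, m) → ¬ A.F l (js k) i' := by
    intro k hk l hl i' hs hf
    exact hns k hk
      (seen_trans (seen_self_mono hl) (seen_trans (Seen.step (Seen.refl _) hf) hs))
  have hcrash_ge : ∀ k, 1 ≤ k → k ≤ m → ((k : ℕ) : ℕ∞) ≤ A.crash (js k) := by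
    intro k h1 hk
    obtain ⟨k', rfl⟩ : ∃ k', k = k' + 1 := ⟨k - 1, by omega⟩
    by_contra h
    exact A.after_crash k' (js (k' + 1)) i (not_le.mp h) (hF2 k' hk i (hseeni _ hk))
  have hcrash_le : ∀ k < m, A.crash (js k) ≤ ((k + 1 : ℕ) : ℕ∞) := by
    intro k hk
    by_contra h
    exact hnoLater k (le_of_lt hk) k le_rfl i (hseeni (k + 1) hk)
      (A.before_crash k (js k) i (not_le.mp h))
  have hAF_true : ∀ k ≤ m, ∀ l < k, ∀ i', Seen A (i', l + 1) (i, m) → A.F l (js k) i' := by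
    intro k hk l hl i' hs
    rcases eq_or_lt_of_le (Nat.succ_le_of_lt hl) with he | hlt
    · subst he
      exact hF2 l hk i' hs
    · refine A.before_crash l (js k) i' (lt_of_lt_of_le ?_ (hcrash_ge k (by omega) hk))
      exact_mod_cast hlt
  -- the modified adversary
  set Bin : Fin n → Bool := fun j => if j = js 0 then false else A.init j with hBin
  set Bcr : Fin n → ℕ∞ := fun j =>
    if h : ∃ k, k ≤ m ∧ js k = j then
      (if Nat.find h < m then ((Nat.find h + 1 : ℕ) : ℕ∞) else ⊤)
    else A.crash j with hBcr
  set BF : ℕ → Fin n → Fin n → Prop := fun l j i' =>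
    if h : ∃ k, k ≤ m ∧ js k = j then
      (if Nat.find h < m then (l < Nat.find h ∨ (l = Nat.find h ∧ i' = js (Nat.find h + 1)))
       else True)
    else A.F l j i' with hBF
  have hfind : ∀ k ≤ m, ∀ (h : ∃ k', k' ≤ m ∧ js k' = js k), Nat.find h = k := by
    intro k hk h
    obtain ⟨h1, h2⟩ := Nat.find_spec h
    exact hinj _ h1 _ hk h2
  have hBcr_eq : ∀ k ≤ m, Bcr (js k) = if k < m then ((k + 1 : ℕ) : ℕ∞) else ⊤ := by
    intro k hk
    have h : ∃ k', k' ≤ m ∧ js k' = js k := ⟨k, hk, rfl⟩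
    simp only [hBcr]
    rw [dif_pos h, hfind k hk h]
  have hBF_eq : ∀ k ≤ m, ∀ l i', BF l (js k) i' ↔
      (if k < m then (l < k ∨ (l = k ∧ i' = js (k + 1))) else True) := by
    intro k hk l i'
    have h : ∃ k', k' ≤ m ∧ js k' = js k := ⟨k, hk, rfl⟩
    simp only [hBF]
    rw [dif_pos h, hfind k hk h]
  have hnotpath : ∀ j : Fin n, (¬ ∃ k, k ≤ m ∧ js k = j) →
      Bcr j = A.crash j ∧ ∀ l i', (BF l j i' ↔ A.F l j i') := by
    intro j h
    constructor
    · simp only [hBcr]; rw [dif_neg h]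
    · intro l i'; simp only [hBF]; rw [dif_neg h]
  -- structure obligations
  have cp : ∀ j, 1 ≤ Bcr j := by
    intro j
    by_cases h : ∃ k, k ≤ m ∧ js k = j
    · simp only [hBcr]
      rw [dif_pos h]
      split
      · exact_mod_cast Nat.succ_le_succ (Nat.zero_le _)
      · exact le_top
    · rw [(hnotpath j h).1]; exact A.crash_pos j
  have bc : ∀ (l : ℕ) (j i' : Fin n), ((l + 1 : ℕ) : ℕ∞) < Bcr j → BF l j i' := by
    intro l j i' hlt
    by_cases h : ∃ k, k ≤ m ∧ js k = j
    · obtain ⟨hk1, hk2⟩ := Nat.find_spec h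
      rw [← hk2] at hlt ⊢
      rw [hBcr_eq _ hk1] at hlt
      rw [hBF_eq _ hk1]
      by_cases hm' : Nat.find h < m
      · rw [if_pos hm'] at hlt
        rw [if_pos hm']
        left
        have : l + 1 < Nat.find h + 1 := by exact_mod_cast hlt
        omega
      · rw [if_neg hm']
        trivial
    · rw [(hnotpath j h).1] at hlt
      rw [(hnotpath j h).2]
      exact A.before_crash l j i' hlt
  have ac : ∀ (l : ℕ) (j i' : Fin n), Bcr j < ((l + 1 : ℕ) : ℕ∞) → ¬ BF l j i' := by
    intro l j i' hlt
    by_cases h : ∃ k, k ≤ m ∧ js k = j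
    · obtain ⟨hk1, hk2⟩ := Nat.find_spec h
      rw [← hk2] at hlt ⊢
      rw [hBcr_eq _ hk1] at hlt
      rw [hBF_eq _ hk1]
      by_cases hm' : Nat.find h < m
      · rw [if_pos hm'] at hlt
        rw [if_pos hm']
        have : Nat.find h + 1 < l + 1 := by exact_mod_cast hlt
        rintro (h' | ⟨h', -⟩) <;> omega
      · rw [if_neg hm'] at hlt
        exact absurd hlt (not_lt.mpr le_top)
    · rw [(hnotpath j h).1] at hlt
      rw [(hnotpath j h).2]
      exact A.after_crash l j i' hlt
  refine ⟨⟨Bin, BF, Bcr, cp, bc, ac⟩, ?_, ?_, ?_, ?_, ?_, ?_, ?_, ?_⟩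
  · -- Valid
    have hsub : {j : Fin n | Bcr j ≠ ⊤} ⊆ {j | A.Faulty j} := by
      intro j hj
      simp only [Set.mem_setOf_eq] at hj ⊢
      by_cases h : ∃ k, k ≤ m ∧ js k = j
      · obtain ⟨hk1, hk2⟩ := Nat.find_spec h
        rw [← hk2] at hj ⊢
        rw [hBcr_eq _ hk1] at hj
        by_cases hm' : Nat.find h < m
        · have hle := hcrash_le (Nat.find h) hm'
          exact ne_top_of_lt (lt_of_le_of_lt hle (ENat.coe_lt_top _))
        · rw [if_neg hm'] at hj
          exact absurd rfl hj
      · rw [(hnotpath j h).1] at hj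
        exact hj
    exact le_trans (Set.ncard_le_ncard hsub (Set.toFinite _)) hA
  · -- sameLocal
    refine ⟨hact, ?_, ?_⟩
    · show ((m : ℕ) : ℕ∞) < Bcr i
      rw [(hnotpath i (by rintro ⟨k, hk, he⟩; exact hji k hk he)).1]
      exact hact
    · refine sameView_of_agree ?_ ?_
      · intro l j i' hs
        show A.F l j i' ↔ BF l j i'
        have hlm : l + 1 ≤ m := seen_snd_le hs
        by_cases h : ∃ k, k ≤ m ∧ js k = j
        · obtain ⟨k, hk, rfl⟩ := h
          rw [hBF_eq k hk l i']
          by_cases hm' : k < m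
          · rw [if_pos hm']
            rcases lt_trichotomy l k with hlk | hlk | hlk
            · exact iff_of_true (hAF_true k hk l hlk i' hs) (Or.inl hlk)
            · refine iff_of_false (hnoLater k hk l (le_of_eq hlk.symm) i' hs) ?_
              rintro (h' | ⟨-, h2⟩)
              · omega
              · exact hns (k + 1) hm' (by rw [← h2, ← hlk]; exact hs)
            · refine iff_of_false (hnoLater k hk l (le_of_lt hlk) i' hs) ?_
              rintro (h' | ⟨h', -⟩) <;> omega
          · rw [if_neg hm']
            have hkm : k = m := by omega
            subst hkm
            exact iff_of_true (hAF_true k le_rfl l (by omega) i' hs) trivial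
        · exact ((hnotpath j h).2 l i').symm
      · intro j hs
        have hne : j ≠ js 0 := fun e => hns 0 (Nat.zero_le m) (by rw [← e]; exact hs)
        show A.init j = Bin j
        simp only [hBin]
        rw [if_neg hne]
  · -- B.Active (js m) m
    show ((m : ℕ) : ℕ∞) < Bcr (js m)
    rw [hBcr_eq m le_rfl, if_neg (lt_irrefl m)]
    exact ENat.coe_lt_top m
  · -- Knows ∃0
    have hstep : ∀ k < m, BF k (js k) (js (k + 1)) := by
      intro k hk
      rw [hBF_eq k (le_of_lt hk) k (js (k + 1)), if_pos hk]
      exact Or.inr ⟨rfl, rfl⟩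
    have hchain := chain_seen ⟨Bin, BF, Bcr, cp, bc, ac⟩ js m hstep m le_rfl
    intro C hC hslC
    have hie : Bin (js 0) = C.init (js 0) := hslC.2.2.2.1 (js 0) hchain
    refine ⟨js 0, ?_⟩
    rw [← hie]
    simp [hBin]
  · -- init
    show Bin (js 0) = false
    simp [hBin]
  · -- crash values
    intro k hk
    show Bcr (js k) = _
    rw [hBcr_eq k (le_of_lt hk), if_pos hk]
  · -- F restriction
    intro k hk i' hf
    have := (hBF_eq k (le_of_lt hk) k i').mp hf
    rw [if_pos hk] at this
    rcases this with h' | ⟨-, h'⟩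
    · omega
    · exact h'
  · -- js m nonfaulty
    show ¬ (Bcr (js m) ≠ ⊤)
    rw [hBcr_eq m le_rfl, if_neg (lt_irrefl m)]
    simp

/-- Converse: if some time is revealed, no indistinguishable run has an active process
knowing ∃0 (given `¬ K_i ∃0`). -/
lemma revealed_no_knowledge (t : ℕ) (A : Adversary n) (i : Fin n) (m : ℕ)
    (hnk : ¬ Knows t (existsVal false) A i m)
    {k : ℕ} (hk : k ≤ m) (hrev : RevealedTime A k i m)
    (B : Adversary n) (hBv : Valid t B) (hsl : sameLocal A B i m)
    (j : Fin n) (hjB : B.Active j m) (hkn : Knows t (existsVal false) B j m) : False := by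
  classical
  -- step 1: a seen zero in B
  have h0 : ∃ j0, Seen B (j0, 0) (j, m) ∧ B.init j0 = false := by
    by_contra hno
    push_neg at hno
    obtain ⟨j0, hj0⟩ := hkn
      ⟨fun j0 => if Seen B (j0, 0) (j, m) then B.init j0 else true,
        B.F, B.crash, B.crash_pos, B.before_crash, B.after_crash⟩
      hBv
      ⟨hjB, hjB, sameView_of_agree (fun _ _ _ _ => Iff.rfl)
        (fun j0 hs => (if_pos hs).symm)⟩
    by_cases hs : Seen B (j0, 0) (j, m)
    · apply hno j0 hs
      have h' : (if Seen B (j0, 0) (j, m) then B.init j0 else true) = false := hj0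
      rwa [if_pos hs] at h'
    · have h' : (if Seen B (j0, 0) (j, m) then B.init j0 else true) = false := hj0
      rw [if_neg hs] at h'
      exact Bool.noConfusion h'
  obtain ⟨j0, hc0, hi0⟩ := h0
  -- step 2: decompose the chain at time k
  obtain ⟨jk, hc1, hc2⟩ := seen_decompose hc0 k (Nat.zero_le k) hk
  obtain ⟨hAi, hBi, hview⟩ := hsl
  -- step 3: case on how ⟨jk,k⟩ is revealed
  rcases hrev jk with hseen | ⟨i', k', hkeq, hs', hnf⟩
  · have hseenB : Seen B (jk, k) (i, m) := (hview.1 _).mp hseen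
    have hj0B : Seen B (j0, 0) (i, m) := seen_trans hc1 hseenB
    have hj0A : Seen A (j0, 0) (i, m) := (hview.1 _).mpr hj0B
    have hinitA : A.init j0 = false := by rw [hview.2.1 j0 hj0A]; exact hi0
    apply hnk
    intro D hD hslD
    exact ⟨j0, by rw [← hslD.2.2.2.1 j0 hj0A]; exact hinitA⟩
  · subst hkeq
    have hnfB : ¬ B.F k' jk i' := fun h => hnf ((hview.2.2 k' jk i' hs').mpr h)
    have hcr : B.crash jk ≤ ((k' + 1 : ℕ) : ℕ∞) := by
      by_contra h
      exact hnfB (B.before_crash k' jk i' (not_le.mp h))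
    have hstuck : ∀ l, k' + 1 ≤ l → ∀ q, ¬ B.F l jk q := by
      intro l hl q hf
      refine B.after_crash l jk q ?_ hf
      calc B.crash jk ≤ ((k' + 1 : ℕ) : ℕ∞) := hcr
        _ ≤ ((l : ℕ) : ℕ∞) := by exact_mod_cast hl
        _ < ((l + 1 : ℕ) : ℕ∞) := by exact_mod_cast Nat.lt_succ_self l
    have hje : j = jk := seen_stuck hstuck hc2
    have hjm : ((m : ℕ) : ℕ∞) < B.crash j := hjB
    rw [hje] at hjm
    have : ((m : ℕ) : ℕ∞) < ((m : ℕ) : ℕ∞) :=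
      lt_of_lt_of_le hjm (le_trans hcr (by exact_mod_cast hk))
    exact lt_irrefl _ this

end HiddenPathAux

/-- Provided `¬ K_i ∃0` at `⟨i,m⟩`, a hidden path w.r.t. `⟨i,m⟩` exists iff there is an
indistinguishable run in which some process active at `m` knows `∃0`; moreover the
witnessing adversary can be chosen so that `j₀` has initial value 0, each `⟨j_k,k⟩`
(`k < m`) crashes sending a message solely to `⟨j_{k+1},k+1⟩`, and `j_m` is nonfaulty. -/
theorem hidden_path_iff_indistinguishable_knowledge (n t : ℕ) (ht : t < n)
    (A : Adversary n) (hA : Valid t A) (i : Fin n) (m : ℕ) (hact : A.Active i m)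
    (hnk : ¬ Knows t (existsVal false) A i m) :
    (HiddenPath A i m ↔
      ∃ B : Adversary n, Valid t B ∧ sameLocal A B i m ∧
        ∃ j, B.Active j m ∧ Knows t (existsVal false) B j m) ∧
    (∀ js : ℕ → Fin n, (∀ k ≤ m, ¬ RevealedNode A (js k) k i m) →
      ∃ B : Adversary n, Valid t B ∧ sameLocal A B i m ∧
        B.Active (js m) m ∧ Knows t (existsVal false) B (js m) m ∧
        B.init (js 0) = false ∧
        (∀ k < m, B.crash (js k) = ((k + 1 : ℕ) : ℕ∞)) ∧
        (∀ k < m, ∀ i' : Fin n, B.F k (js k) i' → i' = js (k + 1)) ∧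
        ¬ B.Faulty (js m)) := by
  constructor
  · constructor
    · rintro ⟨js, hjs⟩
      obtain ⟨B, h1, h2, h3, h4, -⟩ := hidden_construct t A hA i m hact js hjs
      exact ⟨B, h1, h2, js m, h3, h4⟩
    · rintro ⟨B, hBv, hsl, j, hjB, hkn⟩
      by_contra hh
      obtain ⟨k, hk, hrev⟩ := not_hidden_revealed hh
      exact revealed_no_knowledge t A i m hnk hk hrev B hBv hsl j hjB hkn
  · intro js hjs
    exact hidden_construct t A hA i m hact js hjs
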